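/- Let T : C → C be a contraction with constant θ ∈ (0,1), fixed point p, and the K iteration with ∑αₙβₙ = ∞. For any sequence (tₙ) in C, defining εₙ = ‖tₙ₊₁ - f(T,tₙ)‖ where f(T,·) is one step of the K iteration, one has: εₙ → 0 if and only if tₙ → p (T-stability of the K iteration). -/

import Mathlib

open Filter

private lemma comb_norm {X : Type*} [NormedAddCommGroup X] [NormedSpace ℝ X]
    (s : ℝ) (hs : s ∈ Set.Icc (0:ℝ) 1) (a b p : X) :
    ‖(1 - s) • a + s • b - p‖ ≤ (1 - s) * ‖a - p‖ + s * ‖b - p‖ := by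
  have h : (1 - s) • a + s • b - p = (1 - s) • (a - p) + s • (b - p) := by module
  rw [h]
  refine (norm_add_le _ _).trans ?_
  rw [norm_smul, norm_smul, Real.norm_eq_abs, Real.norm_eq_abs,
    abs_of_nonneg (by linarith [hs.2]), abs_of_nonneg hs.1]

private lemma rec_tendsto_zero (q : ℝ) (hq0 : 0 ≤ q) (hq1 : q < 1)
    (a e : ℕ → ℝ) (ha : ∀ n, 0 ≤ a n)
    (hrec : ∀ n, a (n + 1) ≤ q * a n + e n)
    (he : Tendsto e atTop (nhds 0)) : Tendsto a atTop (nhds 0) := by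
  rw [Metric.tendsto_atTop]
  intro εp hεp
  have h1q : 0 < 1 - q := by linarith
  have hδ : 0 < εp * (1 - q) / 2 := by positivity
  obtain ⟨N, hN⟩ := (Metric.tendsto_atTop.mp he) (εp * (1 - q) / 2) hδ
  have key : ∀ k, a (N + k) ≤ q ^ k * a N + εp / 2 := by
    intro k
    induction k with
    | zero => simp; linarith [ha N]
    | succ k ih =>
      have h1 := hrec (N + k)
      have h2 := hN (N + k) (Nat.le_add_right _ _)
      rw [Real.dist_eq, sub_zero] at h2
      have h3 : e (N + k) ≤ εp * (1 - q) / 2 := (le_abs_self _).trans h2.le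
      have : a (N + k + 1) ≤ q * (q ^ k * a N + εp / 2) + εp * (1 - q) / 2 := by
        refine h1.trans ?_
        have := mul_le_mul_of_nonneg_left ih hq0
        linarith
      calc a (N + (k + 1)) = a (N + k + 1) := by ring_nf
        _ ≤ q * (q ^ k * a N + εp / 2) + εp * (1 - q) / 2 := this
        _ = q ^ (k + 1) * a N + εp / 2 := by ring
  -- q ^ k * a N → 0
  have hpow : Tendsto (fun k => q ^ k * a N) atTop (nhds 0) := by
    simpa using (tendsto_pow_atTop_nhds_zero_of_lt_one hq0 hq1).mul_const (a N)
  obtain ⟨K, hK⟩ := (Metric.tendsto_atTop.mp hpow) (εp / 2) (by linarith)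
  refine ⟨N + K, fun n hn => ?_⟩
  have hnk : n = N + (n - N) := by omega
  have hKle : K ≤ n - N := by omega
  have h4 := key (n - N)
  have h5 := hK (n - N) hKle
  rw [Real.dist_eq, sub_zero] at h5 ⊢
  rw [abs_of_nonneg (ha n)]
  have h6 : q ^ (n - N) * a N < εp / 2 := (le_abs_self _).trans_lt h5
  rw [hnk]
  linarith [key (n - N)]

theorem stmt_18 {X : Type*} [NormedAddCommGroup X] [NormedSpace ℝ X] [CompleteSpace X]
    (C : Set X) (hCne : C.Nonempty) (hCcl : IsClosed C) (hCcv : Convex ℝ C)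
    (T : X → X) (hTC : ∀ x ∈ C, T x ∈ C) (θ : ℝ) (hθ : θ ∈ Set.Ioo (0:ℝ) 1)
    (hT : ∀ x ∈ C, ∀ y ∈ C, ‖T x - T y‖ ≤ θ * ‖x - y‖)
    (p : X) (hpC : p ∈ C) (hp : T p = p)
    (α β : ℕ → ℝ) (hα : ∀ n, α n ∈ Set.Icc (0:ℝ) 1) (hβ : ∀ n, β n ∈ Set.Icc (0:ℝ) 1)
    (hdiv : Tendsto (fun N => ∑ k ∈ Finset.range N, α k * β k) atTop atTop)
    (f : ℕ → X → X)
    (hf : ∀ n t, f n t =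
      T (T ((1 - α n) • T t + α n • T ((1 - β n) • t + β n • T t))))
    (t : ℕ → X) (htC : ∀ n, t n ∈ C)
    (ε : ℕ → ℝ) (hεdef : ∀ n, ε n = ‖t (n + 1) - f n (t n)‖) :
    Tendsto ε atTop (nhds 0) ↔ Tendsto t atTop (nhds p) := by
  obtain ⟨hθ0, hθ1⟩ := hθ
  -- T x close to p
  have hTp : ∀ x ∈ C, ‖T x - p‖ ≤ θ * ‖x - p‖ := fun x hx => by
    simpa [hp] using hT x hx p hpC
  -- main contraction estimate for one K-iteration step
  have hmain : ∀ n, ∀ x ∈ C, ‖f n x - p‖ ≤ θ ^ 3 * ‖x - p‖ := by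
    intro n x hx
    set y1 := (1 - β n) • x + β n • T x with hy1
    have hy1C : y1 ∈ C := hCcv hx (hTC x hx) (by linarith [(hβ n).2]) (hβ n).1 (by ring)
    have hy1p : ‖y1 - p‖ ≤ ‖x - p‖ := by
      refine (comb_norm (β n) (hβ n) x (T x) p).trans ?_
      have h1 := hTp x hx
      have h2 : θ * ‖x - p‖ ≤ ‖x - p‖ := by nlinarith [norm_nonneg (x - p)]
      nlinarith [(hβ n).1, (hβ n).2]
    set y2 := (1 - α n) • T x + α n • T y1 with hy2
    have hy2C : y2 ∈ C := hCcv (hTC x hx) (hTC _ hy1C)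
      (by linarith [(hα n).2]) (hα n).1 (by ring)
    have hy2p : ‖y2 - p‖ ≤ θ * ‖x - p‖ := by
      refine (comb_norm (α n) (hα n) (T x) (T y1) p).trans ?_
      have h1 := hTp x hx
      have h2 := (hTp y1 hy1C).trans (by nlinarith : θ * ‖y1 - p‖ ≤ θ * ‖x - p‖)
      nlinarith [(hα n).1, (hα n).2]
    have hfx : f n x = T (T y2) := by rw [hf]
    calc ‖f n x - p‖ = ‖T (T y2) - p‖ := by rw [hfx]
      _ ≤ θ * ‖T y2 - p‖ := hTp _ (hTC _ hy2C)
      _ ≤ θ * (θ * ‖y2 - p‖) := by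
          have := hTp y2 hy2C
          nlinarith
      _ ≤ θ * (θ * (θ * ‖x - p‖)) := by
          nlinarith [mul_le_mul_of_nonneg_left hy2p (by positivity : (0:ℝ) ≤ θ * θ)]
      _ = θ ^ 3 * ‖x - p‖ := by ring
  have hq0 : (0:ℝ) ≤ θ ^ 3 := by positivity
  have hq1 : θ ^ 3 < 1 := pow_lt_one₀ hθ0.le hθ1 (by norm_num)
  have hεnn : ∀ n, 0 ≤ ε n := fun n => (hεdef n).symm ▸ norm_nonneg _
  constructor
  · -- ε → 0 ⇒ t → p
    intro hε
    have hrec : ∀ n, ‖t (n + 1) - p‖ ≤ θ ^ 3 * ‖t n - p‖ + ε n := by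
      intro n
      have : t (n + 1) - p = (t (n + 1) - f n (t n)) + (f n (t n) - p) := by abel
      rw [this]
      refine (norm_add_le _ _).trans ?_
      rw [← hεdef n]
      linarith [hmain n (t n) (htC n)]
    have := rec_tendsto_zero (θ ^ 3) hq0 hq1 (fun n => ‖t n - p‖) ε
      (fun n => norm_nonneg _) hrec hε
    exact tendsto_iff_norm_sub_tendsto_zero.mpr this
  · -- t → p ⇒ ε → 0
    intro ht
    have ha : Tendsto (fun n => ‖t n - p‖) atTop (nhds 0) :=
      tendsto_iff_norm_sub_tendsto_zero.mp ht
    have hub : ∀ n, ε n ≤ ‖t (n + 1) - p‖ + θ ^ 3 * ‖t n - p‖ := by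
      intro n
      rw [hεdef n]
      have h : t (n + 1) - f n (t n) = (t (n + 1) - p) + (p - f n (t n)) := by abel
      rw [h]
      refine (norm_add_le _ _).trans ?_
      rw [norm_sub_rev p (f n (t n))]
      linarith [hmain n (t n) (htC n)]
    have hlim : Tendsto (fun n => ‖t (n + 1) - p‖ + θ ^ 3 * ‖t n - p‖) atTop (nhds 0) := by
      have h1 : Tendsto (fun n => ‖t (n + 1) - p‖) atTop (nhds 0) :=
        ha.comp (tendsto_add_atTop_nat 1)
      have h2 : Tendsto (fun n => θ ^ 3 * ‖t n - p‖) atTop (nhds 0) := by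
        simpa using ha.const_mul (θ ^ 3)
      simpa using h1.add h2
    exact squeeze_zero hεnn hub hlim
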